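/- arXiv:1305.5186 — 2 statements merged into one kernel-verified Lean document; each statement's English description precedes it below -/
import Mathlib

section
/- Let b > a be real numbers and Q : ℕ × ℕ → [a,b] a function such that (1) lim_{n→∞} Q(n,0) = a, (2) for each fixed n, lim_{m→∞} Q(n,m) = b, and (3) for every ε > 0 there is N such that for all n ≥ N and all m, Q(n,m+1) < Q(n,m) + ε. Then for every q ∈ [a,b] there exist strictly increasing sequences (n_k) and (m_k) of natural numbers with lim_{k→∞} Q(n_k, m_k) = q. -/
open Filter

private lemma step_bound (Q : ℕ → ℕ → ℝ) (n : ℕ) (ε : ℝ)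
    (h : ∀ m, Q n (m + 1) < Q n m + ε) : ∀ m : ℕ, Q n m ≤ Q n 0 + m * ε := by
  intro m
  induction m with
  | zero => simp
  | succ m ih =>
    have := h m
    push_cast
    nlinarith

private lemma key_exists (a b q : ℝ) (hab : a < b) (Q : ℕ → ℕ → ℝ)
    (hrange : ∀ n m, Q n m ∈ Set.Icc a b)
    (h1 : Tendsto (fun n => Q n 0) atTop (nhds a))
    (h2 : ∀ n, Tendsto (fun m => Q n m) atTop (nhds b))
    (h3 : ∀ ε > (0:ℝ), ∃ N : ℕ, ∀ n ≥ N, ∀ m : ℕ, Q n (m + 1) < Q n m + ε)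
    (hq : q ∈ Set.Icc a b) :
    ∀ δ > (0:ℝ), ∀ np mp : ℕ, ∃ p : ℕ × ℕ, np < p.1 ∧ mp < p.2 ∧ |Q p.1 p.2 - q| < δ := by
  intro δ hδ np mp
  rcases eq_or_lt_of_le hq.1 with hqa | hqa
  · -- q = a
    set ε : ℝ := δ / (mp + 2) with hε_def
    have hε : 0 < ε := by positivity
    obtain ⟨N, hN⟩ := h3 ε hε
    have hev : ∀ᶠ n in atTop, Q n 0 < a + ε :=
      h1.eventually_lt_const (by linarith)
    obtain ⟨n, hn1, hn2⟩ := ((eventually_ge_atTop (max N (np + 1))).and hev).exists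
    have hnN : N ≤ n := le_trans (le_max_left _ _) hn1
    have hbnd := step_bound Q n ε (hN n hnN) (mp + 1)
    refine ⟨(n, mp + 1), ?_, by simp, ?_⟩
    · exact lt_of_lt_of_le (Nat.lt_succ_self np) (le_trans (le_max_right _ _) hn1)
    · have hlo : a ≤ Q n (mp + 1) := (hrange n (mp + 1)).1
      have heq : ((mp : ℝ) + 2) * ε = δ := by
        rw [hε_def]; field_simp
      rw [abs_lt]
      constructor
      · simp only
        rw [← hqa]; linarith
      · simp only
        rw [← hqa]
        push_cast at hbnd
        nlinarith
  · -- a < q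
    set ε : ℝ := min δ ((q - a) / (mp + 2)) with hε_def
    have hε : 0 < ε := by
      exact lt_min hδ (div_pos (by linarith) (by positivity))
    have hεδ : ε ≤ δ := min_le_left _ _
    have hεq : ε ≤ (q - a) / (mp + 2) := min_le_right _ _
    obtain ⟨N, hN⟩ := h3 ε hε
    have hev : ∀ᶠ n in atTop, Q n 0 < a + ε :=
      h1.eventually_lt_const (by linarith)
    obtain ⟨n, hn1, hn2⟩ := ((eventually_ge_atTop (max N (np + 1))).and hev).exists
    have hnN : N ≤ n := le_trans (le_max_left _ _) hn1
    have hex : ∃ m, q - ε < Q n m :=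
      ((h2 n).eventually (eventually_gt_nhds (show q - ε < b by linarith [hq.2]))).exists
    set m := Nat.find hex with hm_def
    have hm : q - ε < Q n m := Nat.find_spec hex
    have hmin : ∀ j < m, Q n j ≤ q - ε := fun j hj =>
      not_lt.mp (Nat.find_min hex hj)
    have hbnd := step_bound Q n ε (hN n hnN) m
    -- mp < m
    have hmpm : mp < m := by
      by_contra h
      push_neg at h
      have hc : (m : ℝ) ≤ mp := by exact_mod_cast h
      have h1' : q - ε < a + ε + m * ε := by linarith
      have h2' : ((mp : ℝ) + 2) * ε ≤ q - a := by
        rw [le_div_iff₀ (show (0:ℝ) < (mp:ℝ) + 2 by positivity)] at hεq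
        nlinarith
      nlinarith
    have hmpos : 0 < m := Nat.lt_of_le_of_lt (Nat.zero_le mp) hmpm
    -- Q n m < q
    have hup : Q n m < q := by
      have hpred : Q n (m - 1) ≤ q - ε := hmin (m - 1) (Nat.sub_lt hmpos one_pos)
      have hstep := hN n hnN (m - 1)
      rw [Nat.sub_add_cancel hmpos] at hstep
      linarith
    exact ⟨(n, m), lt_of_lt_of_le (Nat.lt_succ_self np) (le_trans (le_max_right _ _) hn1),
      hmpm, by rw [abs_lt]; constructor <;> simp only <;> linarith⟩

/-- double-sequence intermediate value lemma. -/
theorem double_sequence_intermediate_limits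
    (a b : ℝ) (hab : a < b) (Q : ℕ → ℕ → ℝ)
    (hrange : ∀ n m, Q n m ∈ Set.Icc a b)
    (h1 : Tendsto (fun n => Q n 0) atTop (nhds a))
    (h2 : ∀ n, Tendsto (fun m => Q n m) atTop (nhds b))
    (h3 : ∀ ε > (0:ℝ), ∃ N : ℕ, ∀ n ≥ N, ∀ m : ℕ, Q n (m + 1) < Q n m + ε) :
    ∀ q ∈ Set.Icc a b, ∃ nk mk : ℕ → ℕ, StrictMono nk ∧ StrictMono mk ∧
      Tendsto (fun k => Q (nk k) (mk k)) atTop (nhds q) := by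
  intro q hq
  have key := key_exists a b q hab Q hrange h1 h2 h3 hq
  choose f hf1 hf2 hf3 using fun (k np mp : ℕ) =>
    key (1 / (k + 1)) (by positivity) np mp
  let g : ℕ → ℕ × ℕ := fun k => Nat.rec (f 0 0 0) (fun k p => f (k + 1) p.1 p.2) k
  have hgsucc : ∀ k, g (k + 1) = f (k + 1) (g k).1 (g k).2 := fun k => rfl
  refine ⟨fun k => (g k).1, fun k => (g k).2, ?_, ?_, ?_⟩
  · exact strictMono_nat_of_lt_succ fun k => by rw [hgsucc]; exact hf1 (k + 1) _ _
  · exact strictMono_nat_of_lt_succ fun k => by rw [hgsucc]; exact hf2 (k + 1) _ _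
  · have herr : ∀ k : ℕ, |Q (g k).1 (g k).2 - q| ≤ 1 / (k + 1) := by
      intro k
      cases k with
      | zero => exact le_of_lt (hf3 0 0 0)
      | succ k => exact le_of_lt (hf3 (k + 1) (g k).1 (g k).2)
    have h0 : Tendsto (fun k : ℕ => Q (g k).1 (g k).2 - q) atTop (nhds 0) := by
      apply squeeze_zero_norm (fun k => ?_) tendsto_one_div_add_atTop_nhds_zero_nat
      · rw [Real.norm_eq_abs]; exact herr k
    simpa using h0.add_const q
end

section
/- Let X be a geodesic δ-hyperbolic space. There exist constants K and R depending only on δ such that the following holds: let α and β be geodesic lines in X neither of which enters the K-neighborhood of the other, and let p ∈ α, q ∈ β be points minimizing the distance between α and β. If x is a point with dist(x, α) ≤ δ and y a point with dist(y, β) ≤ δ, then any geodesic segment [x,y] passes within distance R of both p and q. -/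
open Metric Set Filter

/-- `γ` is a unit-speed geodesic on the set `I ⊆ ℝ`. -/
def IsGeodOn {X : Type*} [MetricSpace X] (γ : ℝ → X) (I : Set ℝ) : Prop :=
  ∀ s ∈ I, ∀ t ∈ I, dist (γ s) (γ t) = |s - t|

/-- `γ` is a unit-speed geodesic from `x` to `y`, parameterized on `[0, dist x y]`. -/
def IsGeodFromTo {X : Type*} [MetricSpace X] (γ : ℝ → X) (x y : X) : Prop :=
  γ 0 = x ∧ γ (dist x y) = y ∧ IsGeodOn γ (Set.Icc 0 (dist x y))

/-- A geodesic metric space: any two points are joined by a geodesic. -/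
def GeodesicSpace (X : Type*) [MetricSpace X] : Prop :=
  ∀ x y : X, ∃ γ : ℝ → X, IsGeodFromTo γ x y

/-- `X` is `δ`-hyperbolic in the thin-triangles sense: every side of every geodesic
triangle lies in the `δ`-neighborhood of the union of the other two sides. -/
def SlimTriangles (X : Type*) [MetricSpace X] (δ : ℝ) : Prop :=
  ∀ x y z : X, ∀ γ₁ γ₂ γ₃ : ℝ → X,
    IsGeodFromTo γ₁ x y → IsGeodFromTo γ₂ y z → IsGeodFromTo γ₃ z x →
    ∀ t ∈ Set.Icc (0:ℝ) (dist x y),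
      Metric.infDist (γ₁ t)
        (γ₂ '' Set.Icc 0 (dist y z) ∪ γ₃ '' Set.Icc 0 (dist z x)) ≤ δ

/-- A geodesic is continuous on its interval of definition. -/
lemma geod_continuousOn {X : Type*} [MetricSpace X] {γ : ℝ → X} {a b : ℝ}
    (h : IsGeodOn γ (Set.Icc a b)) : ContinuousOn γ (Set.Icc a b) := by
  intro s hs
  rw [Metric.continuousWithinAt_iff]
  intro ε hε
  refine ⟨ε, hε, fun {t} ht hts => ?_⟩
  rw [h t ht s hs]
  rwa [Real.dist_eq] at hts

/-- The image of a geodesic segment is compact. -/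
lemma geod_image_compact {X : Type*} [MetricSpace X] {γ : ℝ → X} {a b : ℝ}
    (h : IsGeodOn γ (Set.Icc a b)) : IsCompact (γ '' Set.Icc a b) :=
  isCompact_Icc.image_of_continuousOn (geod_continuousOn h)

/-- From `infDist ≤ c` on a nonempty compact set, get an actual close point. -/
lemma exists_near {X : Type*} [MetricSpace X] {w : X} {s : Set X}
    (hs : IsCompact s) (hne : s.Nonempty) {c : ℝ} (h : Metric.infDist w s ≤ c) :
    ∃ z ∈ s, dist w z ≤ c := by
  obtain ⟨z, hz, hzd⟩ := hs.exists_infDist_eq_dist hne w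
  exact ⟨z, hz, hzd ▸ h⟩

lemma le_infDist' {X : Type*} [MetricSpace X] {w : X} {s : Set X} (hne : s.Nonempty)
    {c : ℝ} (h : ∀ z ∈ s, c ≤ dist w z) : c ≤ Metric.infDist w s := by
  by_contra hlt
  obtain ⟨z, hz, hzd⟩ := (Metric.infDist_lt_iff hne).mp (lt_of_not_ge hlt)
  exact absurd (h z hz) (not_le.mpr hzd)

/-- Along an isometric line there is a geodesic between any two of its points,
staying in the range of the line. -/
lemma line_geod {X : Type*} [MetricSpace X] {α : ℝ → X} (hα : Isometry α)
    (s₀ s₁ : ℝ) : ∃ g : ℝ → X, IsGeodFromTo g (α s₀) (α s₁) ∧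
      ∀ u, g u ∈ Set.range α := by
  rcases le_total s₀ s₁ with hle | hle
  · refine ⟨fun u => α (s₀ + u), ?_, fun u => ⟨s₀ + u, rfl⟩⟩
    have hd : dist (α s₀) (α s₁) = s₁ - s₀ := by
      rw [hα.dist_eq, Real.dist_eq, abs_of_nonpos (by linarith)]; ring
    refine ⟨by simp, by rw [hd]; ring_nf, fun u _ v _ => ?_⟩
    rw [hα.dist_eq, Real.dist_eq]
    congr 1; ring
  · refine ⟨fun u => α (s₀ - u), ?_, fun u => ⟨s₀ - u, rfl⟩⟩
    have hd : dist (α s₀) (α s₁) = s₀ - s₁ := by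
      rw [hα.dist_eq, Real.dist_eq, abs_of_nonneg (by linarith)]
    refine ⟨by simp, by rw [hd]; ring_nf, fun u _ v _ => ?_⟩
    rw [hα.dist_eq, Real.dist_eq]
    rw [show s₀ - u - (s₀ - v) = -(u - v) by ring, abs_neg]

/-- "signposts": there are constants `K`, `R` depending only on `δ`
such that for geodesic lines `α`, `β` neither entering the `K`-neighborhood of the
other, with `p ∈ α`, `q ∈ β` minimizing the distance between the lines, any geodesic
joining a point `x` within `δ` of `α` to a point `y` within `δ` of `β` passes within
`R` of both `p` and `q`. -/
theorem signposts (δ : ℝ) (hδ : 0 ≤ δ) :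
    ∃ K R : ℝ, ∀ (X : Type) [MetricSpace X], GeodesicSpace X → SlimTriangles X δ →
      ∀ (α β : ℝ → X), Isometry α → Isometry β →
      (∀ s : ℝ, K < Metric.infDist (α s) (Set.range β)) →
      (∀ t : ℝ, K < Metric.infDist (β t) (Set.range α)) →
      ∀ (s₀ t₀ : ℝ), (∀ s t : ℝ, dist (α s₀) (β t₀) ≤ dist (α s) (β t)) →
      ∀ x y : X, Metric.infDist x (Set.range α) ≤ δ →
        Metric.infDist y (Set.range β) ≤ δ →
      ∀ γ : ℝ → X, IsGeodFromTo γ x y →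
        (∃ s ∈ Set.Icc (0:ℝ) (dist x y), dist (γ s) (α s₀) ≤ R) ∧
        (∃ s ∈ Set.Icc (0:ℝ) (dist x y), dist (γ s) (β t₀) ≤ R) := by
  refine ⟨10*δ+10, 10*δ+10, ?_⟩
  intro X _ hgeo hslim α β hα hβ hKα hKβ s₀ t₀ hmin x y hx hy γ hγ
  set p := α s₀ with hp
  set q := β t₀ with hq
  set L := dist x y with hL
  obtain ⟨hγ0, hγL, hγg⟩ := hγ
  -- the four auxiliary geodesics
  obtain ⟨gpq, gpq0, gpqd, gpqg⟩ := hgeo p q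
  obtain ⟨gqx, gqx0, gqxd, gqxg⟩ := hgeo q x
  obtain ⟨gxp, gxp0, gxpd, gxpg⟩ := hgeo x p
  obtain ⟨gyq, gyq0, gyqd, gyqg⟩ := hgeo y q
  set Ppq := gpq '' Set.Icc 0 (dist p q) with hPpq
  set Pxp := gxp '' Set.Icc 0 (dist x p) with hPxp
  set Pyq := gyq '' Set.Icc 0 (dist y q) with hPyq
  have hrangeα : (Set.range α).Nonempty := ⟨p, s₀, rfl⟩
  have hrangeβ : (Set.range β).Nonempty := ⟨q, t₀, rfl⟩
  -- nearby points on the lines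
  obtain ⟨a, ha, hxa⟩ := (Metric.infDist_lt_iff hrangeα).mp
    (lt_of_le_of_lt hx (by linarith : δ < δ + 1))
  obtain ⟨b, hb, hyb⟩ := (Metric.infDist_lt_iff hrangeβ).mp
    (lt_of_le_of_lt hy (by linarith : δ < δ + 1))
  obtain ⟨s₁, rfl⟩ := ha
  obtain ⟨t₁, rfl⟩ := hb
  obtain ⟨gpa, hgpa, hgpaα⟩ := line_geod hα s₀ s₁
  obtain ⟨gqb, hgqb, hgqbβ⟩ := line_geod hβ t₀ t₁
  obtain ⟨gax, gax0, gaxd, gaxg⟩ := hgeo (α s₁) x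
  obtain ⟨gby, gby0, gbyd, gbyg⟩ := hgeo (β t₁) y
  -- compactness and nonemptiness of geodesic images
  have hIccne : ∀ u v : X, (Set.Icc (0:ℝ) (dist u v)).Nonempty :=
    fun u v => Set.nonempty_Icc.mpr dist_nonneg
  have hPpqc : IsCompact Ppq := geod_image_compact gpqg
  have hPxpc : IsCompact Pxp := geod_image_compact gxpg
  have hPyqc : IsCompact Pyq := geod_image_compact gyqg
  have hPpqne : Ppq.Nonempty := (hIccne p q).image _
  have hPxpne : Pxp.Nonempty := (hIccne x p).image _
  have hPyqne : Pyq.Nonempty := (hIccne y q).image _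
  -- every point of [x,p] is within 2δ+1 of range α
  have hxpα : ∀ z ∈ Pxp, Metric.infDist z (Set.range α) ≤ 2*δ + 1 := by
    rintro z ⟨u, hu, rfl⟩
    have h3 := hslim x p (α s₁) gxp gpa gax ⟨gxp0, gxpd, gxpg⟩ hgpa ⟨gax0, gaxd, gaxg⟩ u hu
    obtain ⟨w, hw, hwd⟩ := exists_near
      ((geod_image_compact hgpa.2.2).union (geod_image_compact gaxg))
      (((hIccne p (α s₁)).image _).mono subset_union_left) h3
    rcases hw with hw | hw
    · obtain ⟨v, _, rfl⟩ := hw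
      calc Metric.infDist (gxp u) (Set.range α) ≤ dist (gxp u) (gpa v) :=
            Metric.infDist_le_dist_of_mem (hgpaα v)
        _ ≤ 2*δ + 1 := by linarith
    · obtain ⟨v, hv, rfl⟩ := hw
      have hva : dist (gax v) (α s₁) = v := by
        have := gaxg v hv 0 ⟨le_refl 0, dist_nonneg⟩
        rw [gax0] at this; rw [this]; rw [sub_zero, abs_of_nonneg hv.1]
      have hvle : v ≤ dist (α s₁) x := hv.2
      calc Metric.infDist (gxp u) (Set.range α)
          ≤ dist (gxp u) (α s₁) := Metric.infDist_le_dist_of_mem ⟨s₁, rfl⟩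
        _ ≤ dist (gxp u) (gax v) + dist (gax v) (α s₁) := dist_triangle _ _ _
        _ ≤ δ + v := by linarith [hva ▸ le_refl (dist (gax v) (α s₁))]
        _ ≤ δ + dist x (α s₁) := by rw [dist_comm x (α s₁)]; linarith
        _ ≤ 2*δ + 1 := by linarith [hxa]
  -- every point of [y,q] is within 2δ+1 of range β
  have hyqβ : ∀ z ∈ Pyq, Metric.infDist z (Set.range β) ≤ 2*δ + 1 := by
    rintro z ⟨u, hu, rfl⟩
    have h3 := hslim y q (β t₁) gyq gqb gby ⟨gyq0, gyqd, gyqg⟩ hgqb ⟨gby0, gbyd, gbyg⟩ u hu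
    obtain ⟨w, hw, hwd⟩ := exists_near
      ((geod_image_compact hgqb.2.2).union (geod_image_compact gbyg))
      (((hIccne q (β t₁)).image _).mono subset_union_left) h3
    rcases hw with hw | hw
    · obtain ⟨v, _, rfl⟩ := hw
      calc Metric.infDist (gyq u) (Set.range β) ≤ dist (gyq u) (gqb v) :=
            Metric.infDist_le_dist_of_mem (hgqbβ v)
        _ ≤ 2*δ + 1 := by linarith
    · obtain ⟨v, hv, rfl⟩ := hw
      have hva : dist (gby v) (β t₁) = v := by
        have := gbyg v hv 0 ⟨le_refl 0, dist_nonneg⟩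
        rw [gby0] at this; rw [this]; rw [sub_zero, abs_of_nonneg hv.1]
      calc Metric.infDist (gyq u) (Set.range β)
          ≤ dist (gyq u) (β t₁) := Metric.infDist_le_dist_of_mem ⟨t₁, rfl⟩
        _ ≤ dist (gyq u) (gby v) + dist (gby v) (β t₁) := dist_triangle _ _ _
        _ ≤ δ + v := by linarith [hva ▸ le_refl (dist (gby v) (β t₁))]
        _ ≤ δ + dist y (β t₁) := by rw [dist_comm y (β t₁)]; linarith [hv.2]
        _ ≤ 2*δ + 1 := by linarith [hyb]
  -- lower bounds along [p,q]
  have hpq_dist : ∀ r ∈ Set.Icc (0:ℝ) (dist p q),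
      dist (gpq r) p = r ∧ dist (gpq r) q = dist p q - r := by
    intro r hr
    constructor
    · have := gpqg r hr 0 ⟨le_refl 0, dist_nonneg⟩
      rw [gpq0] at this; rw [this, sub_zero, abs_of_nonneg hr.1]
    · have := gpqg r hr (dist p q) ⟨dist_nonneg, le_refl _⟩
      rw [gpqd] at this; rw [this, abs_of_nonpos (by linarith [hr.2])]; ring
  have hπα : ∀ r ∈ Set.Icc (0:ℝ) (dist p q),
      r ≤ Metric.infDist (gpq r) (Set.range α) := by
    intro r hr
    refine le_infDist' hrangeα ?_
    rintro z ⟨s, rfl⟩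
    have h1 : dist p q ≤ dist (α s) q := hmin s t₀
    have h2 := (hpq_dist r hr).2
    calc r = dist p q - (dist p q - r) := by ring
      _ ≤ dist (α s) q - dist (gpq r) q := by rw [h2]; linarith
      _ ≤ dist (gpq r) (α s) := by
          have := dist_triangle (α s) (gpq r) q
          rw [dist_comm (α s) (gpq r)] at this; linarith
  have hπβ : ∀ r ∈ Set.Icc (0:ℝ) (dist p q),
      dist p q - r ≤ Metric.infDist (gpq r) (Set.range β) := by
    intro r hr
    refine le_infDist' hrangeβ ?_
    rintro z ⟨t, rfl⟩
    have h1 : dist p q ≤ dist p (β t) := hmin s₀ t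
    have h2 := (hpq_dist r hr).1
    calc dist p q - r ≤ dist p (β t) - dist (gpq r) p := by linarith
      _ ≤ dist (gpq r) (β t) := by
          have := dist_triangle p (gpq r) (β t)
          rw [dist_comm p (gpq r)] at this; linarith
  -- A∩C-type configurations are impossible
  have hnoAC : ∀ w : X, Metric.infDist w Pxp ≤ 2*δ → Metric.infDist w Pyq ≤ 2*δ → False := by
    intro w h1 h2
    obtain ⟨z1, hz1, hz1d⟩ := exists_near hPxpc hPxpne h1
    obtain ⟨z2, hz2, hz2d⟩ := exists_near hPyqc hPyqne h2
    obtain ⟨a', ha', ha'd⟩ := (Metric.infDist_lt_iff hrangeα).mp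
      (lt_of_le_of_lt (hxpα z1 hz1) (by linarith : 2*δ + 1 < 2*δ + 2))
    obtain ⟨b', hb', hb'd⟩ := (Metric.infDist_lt_iff hrangeβ).mp
      (lt_of_le_of_lt (hyqβ z2 hz2) (by linarith : 2*δ + 1 < 2*δ + 2))
    obtain ⟨s', rfl⟩ := ha'
    have : Metric.infDist (α s') (Set.range β) ≤ dist (α s') b' :=
      Metric.infDist_le_dist_of_mem hb'
    have hchain : dist (α s') b' ≤ 8*δ + 4 := by
      calc dist (α s') b' ≤ dist (α s') z1 + dist z1 w + dist w z2 + dist z2 b' := by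
            have t1 := dist_triangle (α s') z1 b'
            have t2 := dist_triangle z1 w b'
            have t3 := dist_triangle w z2 b'
            linarith
        _ ≤ 8*δ + 4 := by
            rw [dist_comm (α s') z1, dist_comm z1 w]; linarith
    have := hKα s'
    linarith
  -- the covering of γ by the three corridors
  have hcover : ∀ t ∈ Set.Icc (0:ℝ) L,
      Metric.infDist (γ t) Pxp ≤ 2*δ ∨ Metric.infDist (γ t) Ppq ≤ 2*δ ∨
      Metric.infDist (γ t) Pyq ≤ 2*δ := by
    intro t ht
    have h1 := hslim x y q γ gyq gqx ⟨hγ0, hγL, hγg⟩ ⟨gyq0, gyqd, gyqg⟩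
      ⟨gqx0, gqxd, gqxg⟩ t ht
    obtain ⟨z, hz, hzd⟩ := exists_near (hPyqc.union (geod_image_compact gqxg))
      (hPyqne.mono subset_union_left) h1
    rcases hz with hz | hz
    · right; right
      exact le_trans (Metric.infDist_le_dist_of_mem hz) (by linarith)
    · obtain ⟨r, hr, rfl⟩ := hz
      have h2 := hslim q x p gqx gxp gpq ⟨gqx0, gqxd, gqxg⟩ ⟨gxp0, gxpd, gxpg⟩
        ⟨gpq0, gpqd, gpqg⟩ r hr
      obtain ⟨z', hz', hz'd⟩ := exists_near (hPxpc.union hPpqc)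
        (hPxpne.mono subset_union_left) h2
      have hd : dist (γ t) z' ≤ 2*δ := by
        calc dist (γ t) z' ≤ dist (γ t) (gqx r) + dist (gqx r) z' := dist_triangle _ _ _
          _ ≤ 2*δ := by linarith
      rcases hz' with hz' | hz'
      · left; exact le_trans (Metric.infDist_le_dist_of_mem hz') hd
      · right; left; exact le_trans (Metric.infDist_le_dist_of_mem hz') hd
  -- closed corridor sets
  have hγcont : ContinuousOn γ (Set.Icc 0 L) := geod_continuousOn hγg
  have hclosed : ∀ S : Set X, IsClosed {t : ℝ | t ∈ Set.Icc (0:ℝ) L ∧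
      Metric.infDist (γ t) S ≤ 2*δ} := by
    intro S
    have : {t : ℝ | t ∈ Set.Icc (0:ℝ) L ∧ Metric.infDist (γ t) S ≤ 2*δ} =
        Set.Icc 0 L ∩ (fun t => Metric.infDist (γ t) S) ⁻¹' Set.Iic (2*δ) := rfl
    rw [this]
    exact ContinuousOn.preimage_isClosed_of_isClosed
      (Metric.continuous_infDist_pt S |>.comp_continuousOn hγcont)
      isClosed_Icc isClosed_Iic
  set A := {t : ℝ | t ∈ Set.Icc (0:ℝ) L ∧ Metric.infDist (γ t) Pxp ≤ 2*δ} with hA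
  set B := {t : ℝ | t ∈ Set.Icc (0:ℝ) L ∧ Metric.infDist (γ t) Ppq ≤ 2*δ} with hB
  set C := {t : ℝ | t ∈ Set.Icc (0:ℝ) L ∧ Metric.infDist (γ t) Pyq ≤ 2*δ} with hC
  have hLmem : (0:ℝ) ∈ Set.Icc (0:ℝ) L ∧ L ∈ Set.Icc (0:ℝ) L :=
    ⟨⟨le_refl 0, dist_nonneg⟩, ⟨dist_nonneg, le_refl L⟩⟩
  have h0A : (0:ℝ) ∈ A := by
    refine ⟨hLmem.1, ?_⟩
    have hm : γ 0 ∈ Pxp := ⟨0, ⟨le_refl 0, dist_nonneg⟩, by rw [gxp0, hγ0]⟩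
    have h := Metric.infDist_le_dist_of_mem (x := γ 0) hm
    rw [dist_self] at h
    linarith
  have hLC : L ∈ C := by
    refine ⟨hLmem.2, ?_⟩
    have hm : γ L ∈ Pyq := ⟨0, ⟨le_refl 0, dist_nonneg⟩, by rw [gyq0, hγL]⟩
    have h := Metric.infDist_le_dist_of_mem (x := γ L) hm
    rw [dist_self] at h
    linarith
  -- transition point near p
  have hfindB : ∀ (u v : Set ℝ), IsClosed u → IsClosed v → Set.Icc (0:ℝ) L ⊆ u ∪ v →
      (0:ℝ) ∈ u → L ∈ v → ∃ t, t ∈ Set.Icc (0:ℝ) L ∧ t ∈ u ∧ t ∈ v := by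
    intro u v hu hv hcov h0 hLv
    obtain ⟨t, ht⟩ := (isPreconnected_closed_iff.mp isPreconnected_Icc) u v hu hv hcov
      ⟨0, hLmem.1, h0⟩ ⟨L, hLmem.2, hLv⟩
    exact ⟨t, ht.1, ht.2.1, ht.2.2⟩
  -- near p
  obtain ⟨t₂, ht₂I, ht₂u, ht₂v⟩ := hfindB A (B ∪ C) (hclosed Pxp)
    ((hclosed Ppq).union (hclosed Pyq))
    (fun t ht => by
      rcases hcover t ht with h | h | h
      · exact Or.inl ⟨ht, h⟩
      · exact Or.inr (Or.inl ⟨ht, h⟩)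
      · exact Or.inr (Or.inr ⟨ht, h⟩))
    h0A (Or.inr hLC)
  have ht₂B : t₂ ∈ B := by
    rcases ht₂v with h | h
    · exact h
    · exact absurd (hnoAC (γ t₂) ht₂u.2 h.2) (fun h => h)
  -- distance to p
  have hnearp : dist (γ t₂) p ≤ 10*δ + 10 := by
    obtain ⟨z, hz, hzd⟩ := exists_near hPpqc hPpqne ht₂B.2
    obtain ⟨r, hr, rfl⟩ := hz
    obtain ⟨w, hw, hwd⟩ := exists_near hPxpc hPxpne ht₂u.2
    have h1 : Metric.infDist (gpq r) (Set.range α) ≤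
        Metric.infDist w (Set.range α) + dist (gpq r) w :=
      Metric.infDist_le_infDist_add_dist
    have h2 : dist (gpq r) w ≤ 4*δ := by
      calc dist (gpq r) w ≤ dist (gpq r) (γ t₂) + dist (γ t₂) w := dist_triangle _ _ _
        _ ≤ 4*δ := by rw [dist_comm (gpq r) (γ t₂)]; linarith
    have h3 := hxpα w hw
    have h4 := hπα r hr
    have hr6 : r ≤ 6*δ + 1 := by linarith
    calc dist (γ t₂) p ≤ dist (γ t₂) (gpq r) + dist (gpq r) p := dist_triangle _ _ _
      _ ≤ 2*δ + r := by rw [(hpq_dist r hr).1]; linarith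
      _ ≤ 10*δ + 10 := by linarith
  -- near q
  obtain ⟨t₃, ht₃I, ht₃u, ht₃v⟩ := hfindB (A ∪ B) C
    ((hclosed Pxp).union (hclosed Ppq)) (hclosed Pyq)
    (fun t ht => by
      rcases hcover t ht with h | h | h
      · exact Or.inl (Or.inl ⟨ht, h⟩)
      · exact Or.inl (Or.inr ⟨ht, h⟩)
      · exact Or.inr ⟨ht, h⟩)
    (Or.inl h0A) hLC
  have ht₃B : t₃ ∈ B := by
    rcases ht₃u with h | h
    · exact absurd (hnoAC (γ t₃) h.2 ht₃v.2) (fun h => h)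
    · exact h
  have hnearq : dist (γ t₃) q ≤ 10*δ + 10 := by
    obtain ⟨z, hz, hzd⟩ := exists_near hPpqc hPpqne ht₃B.2
    obtain ⟨r, hr, rfl⟩ := hz
    obtain ⟨w, hw, hwd⟩ := exists_near hPyqc hPyqne ht₃v.2
    have h1 : Metric.infDist (gpq r) (Set.range β) ≤
        Metric.infDist w (Set.range β) + dist (gpq r) w :=
      Metric.infDist_le_infDist_add_dist
    have h2 : dist (gpq r) w ≤ 4*δ := by
      calc dist (gpq r) w ≤ dist (gpq r) (γ t₃) + dist (γ t₃) w := dist_triangle _ _ _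
        _ ≤ 4*δ := by rw [dist_comm (gpq r) (γ t₃)]; linarith
    have h3 := hyqβ w hw
    have h4 := hπβ r hr
    have hr6 : dist p q - r ≤ 6*δ + 1 := by linarith
    calc dist (γ t₃) q ≤ dist (γ t₃) (gpq r) + dist (gpq r) q := dist_triangle _ _ _
      _ ≤ 2*δ + (dist p q - r) := by rw [(hpq_dist r hr).2]; linarith
      _ ≤ 10*δ + 10 := by linarith
  exact ⟨⟨t₂, ht₂I, hnearp⟩, ⟨t₃, ht₃I, hnearq⟩⟩
end
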